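/- Let q be a prime power, m, n coprime positive integers. Let α generate 𝔽_{q^m} over 𝔽_q and β generate 𝔽_{q^n} over 𝔽_q, and let γ ∈ 𝔽_{q^{mn}}. If for every integer k: (γ = γ^{q^k} ∧ β = β^{q^k} implies α = α^{q^k}) and (γ = γ^{q^k} ∧ α = α^{q^k} implies β = β^{q^k}), then 𝔽_q(γ) = 𝔽_{q^{mn}}; that is, γ generates 𝔽_{q^{mn}} over 𝔽_q. -/

import Mathlib

open Polynomial

section Aux

variable {F : Type*} [Field F] [Fintype F]

/-- The map `y ↦ y ^ q ^ a` is injective on the algebraic closure. -/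
lemma aux_pow_inj (q : ℕ) (hq : q = Fintype.card F) (a : ℕ) :
    Function.Injective (fun y : AlgebraicClosure F => y ^ q ^ a) := by
  let p := ringChar F
  have hp : p.Prime := by
    obtain ⟨n, hpr, hcard⟩ := FiniteField.card F p
    exact hpr
  obtain ⟨n, _, hcard⟩ := FiniteField.card F p
  have hqp : q = p ^ (n : ℕ) := by rw [hq, hcard]
  haveI : CharP (AlgebraicClosure F) p :=
    charP_of_injective_algebraMap (algebraMap F (AlgebraicClosure F)).injective p
  haveI : Fact p.Prime := ⟨hp⟩
  have : (fun y : AlgebraicClosure F => y ^ q ^ a)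
      = (frobenius (AlgebraicClosure F) p)^[(n : ℕ) * a] := by
    funext y
    rw [← coe_iterateFrobenius, iterateFrobenius_def, hqp, ← pow_mul]
  rw [this]
  exact Function.Injective.iterate (frobenius (AlgebraicClosure F) p).injective _

lemma aux_pow_mul (q : ℕ) (x : AlgebraicClosure F) (a t : ℕ)
    (h : x ^ q ^ a = x) : x ^ q ^ (a * t) = x := by
  induction t with
  | zero => simp
  | succ t ih =>
    have : q ^ (a * (t + 1)) = q ^ (a * t) * q ^ a := by ring
    rw [this, pow_mul, ih, h]

lemma aux_pow_gcd (q : ℕ) (hq : q = Fintype.card F) (x : AlgebraicClosure F) :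
    ∀ a b : ℕ, x ^ q ^ a = x → x ^ q ^ b = x → x ^ q ^ (Nat.gcd a b) = x := by
  intro a b
  induction a, b using Nat.gcd.induction with
  | H0 b => intro _ hb; simpa using hb
  | H1 a b ha ih =>
    intro h1 h2
    rw [Nat.gcd_rec]
    refine ih ?_ h1
    -- show x ^ q ^ (b % a) = x
    have hmul : x ^ q ^ (a * (b / a)) = x := aux_pow_mul q x a _ h1
    have : (x ^ q ^ (b % a)) ^ q ^ (a * (b / a)) = x ^ q ^ (a * (b / a)) := by
      have hb : b % a + a * (b / a) = b := Nat.mod_add_div b a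
      rw [hmul, ← pow_mul, ← pow_add, hb]
      exact h2
    exact aux_pow_inj q hq (a * (b / a)) this

/-- Key lemma: Frobenius-fixing exponents are exactly multiples of the degree. -/
lemma aux_key (q : ℕ) (hq : q = Fintype.card F) (x : AlgebraicClosure F) (k : ℕ) :
    x ^ q ^ k = x ↔ (minpoly F x).natDegree ∣ k := by
  have hint : IsIntegral F x := Algebra.IsIntegral.isIntegral x
  set e := (minpoly F x).natDegree with he
  have hepos : 0 < e := minpoly.natDegree_pos hint
  haveI : FiniteDimensional F (IntermediateField.adjoin F {x}) :=
    IntermediateField.adjoin.finiteDimensional hint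
  set E := IntermediateField.adjoin F {x} with hE
  have hrank : Module.finrank F E = e := IntermediateField.adjoin.finrank hint
  haveI : Finite E := Module.finite_of_finite F
  haveI : Fintype E := Fintype.ofFinite E
  have hcardE : Fintype.card E = q ^ e := by
    rw [Module.card_eq_pow_finrank (K := F) (V := E), hrank, hq]
  have hgen : x ∈ E := IntermediateField.mem_adjoin_simple_self F x
  -- forward part of (⇐): x ^ q ^ e = x
  have hxe : x ^ q ^ e = x := by
    have := FiniteField.pow_card (⟨x, hgen⟩ : E)
    rw [hcardE] at this
    have := congrArg (Subtype.val) this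
    push_cast at this
    exact this
  constructor
  · intro hk
    rcases Nat.eq_zero_or_pos k with rfl | hkpos
    · exact dvd_zero e
    set g := Nat.gcd e k with hg
    have hge : g ∣ e := Nat.gcd_dvd_left e k
    have hgk : g ∣ k := Nat.gcd_dvd_right e k
    have hgpos : 0 < g := Nat.gcd_pos_of_pos_left k hepos
    have hxg : x ^ q ^ g = x := aux_pow_gcd q hq x e k hxe hk
    -- all of E is fixed by y ↦ y ^ q ^ g
    have hq1 : 1 < q := by rw [hq]; exact Fintype.one_lt_card
    -- ψ : algebra endomorphism y ↦ y ^ q ^ g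
    let p := ringChar F
    obtain ⟨s, hp, hcard⟩ := FiniteField.card F p
    haveI : CharP (AlgebraicClosure F) p :=
      charP_of_injective_algebraMap (algebraMap F (AlgebraicClosure F)).injective p
    haveI : Fact p.Prime := ⟨hp⟩
    have hqp : q = p ^ (s : ℕ) := by rw [hq, hcard]
    have hpow_eq : ∀ y : AlgebraicClosure F, y ^ q ^ g = y ^ p ^ ((s : ℕ) * g) := by
      intro y; rw [hqp, ← pow_mul]
    let ψ : AlgebraicClosure F →ₐ[F] AlgebraicClosure F :=
      { iterateFrobenius (AlgebraicClosure F) p ((s : ℕ) * g) with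
        commutes' := by
          intro c
          show iterateFrobenius (AlgebraicClosure F) p ((s : ℕ) * g)
              (algebraMap F (AlgebraicClosure F) c) = algebraMap F (AlgebraicClosure F) c
          rw [iterateFrobenius_def, ← map_pow]
          congr 1
          rw [pow_mul, ← hqp, hq]
          exact FiniteField.pow_card_pow g c }
    have hψ : ∀ y : AlgebraicClosure F, ψ y = y ^ q ^ g := by
      intro y
      show iterateFrobenius (AlgebraicClosure F) p ((s : ℕ) * g) y = _
      rw [iterateFrobenius_def, ← hpow_eq]
    -- the equalizer contains x, hence contains E
    have hEsub : E.toSubalgebra ≤ AlgHom.equalizer ψ (AlgHom.id F (AlgebraicClosure F)) := by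
      rw [hE, IntermediateField.adjoin_simple_toSubalgebra_of_isAlgebraic hint.isAlgebraic]
      rw [Algebra.adjoin_le_iff]
      intro y hy
      rw [Set.mem_singleton_iff] at hy
      subst hy
      show ψ y = y
      rw [hψ]; exact hxg
    have hfix : ∀ z : E, z ^ q ^ g = z := by
      intro z
      have hz : (z : AlgebraicClosure F) ∈ E.toSubalgebra := z.2
      have := hEsub hz
      have h2 : ψ (z : AlgebraicClosure F) = (z : AlgebraicClosure F) := this
      rw [hψ] at h2
      ext
      push_cast
      exact h2
    -- count roots of X ^ q ^ g - X in E
    have hle : Fintype.card E ≤ q ^ g := by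
      classical
      have hne : (X ^ q ^ g - X : E[X]) ≠ 0 :=
        FiniteField.X_pow_card_pow_sub_X_ne_zero E hgpos.ne' hq1
      have hdeg : (X ^ q ^ g - X : E[X]).natDegree = q ^ g :=
        FiniteField.X_pow_card_pow_sub_X_natDegree_eq E hgpos.ne' hq1
      have hsub : (Finset.univ : Finset E) ⊆ (X ^ q ^ g - X : E[X]).roots.toFinset := by
        intro z _
        rw [Multiset.mem_toFinset, mem_roots hne]
        simp [Polynomial.IsRoot, sub_eq_zero, hfix z]
      calc Fintype.card E = (Finset.univ : Finset E).card := rfl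
        _ ≤ (X ^ q ^ g - X : E[X]).roots.toFinset.card := Finset.card_le_card hsub
        _ ≤ Multiset.card (X ^ q ^ g - X : E[X]).roots := Multiset.toFinset_card_le _
        _ ≤ (X ^ q ^ g - X : E[X]).natDegree := card_roots' _
        _ = q ^ g := hdeg
    have heg : e ≤ g := by
      rw [hcardE] at hle
      exact (Nat.pow_le_pow_iff_right hq1).mp hle
    have : g = e := Nat.le_antisymm (Nat.le_of_dvd hepos hge) heg
    rw [← this]; exact hgk
  · intro hk
    obtain ⟨t, rfl⟩ := hk
    exact aux_pow_mul q x e t hxe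

end Aux

/-- If `gcd(m,n) = 1`, `α` has degree `m`, `β` has degree `n` over `𝔽_q`, and
`γ ∈ 𝔽_{q^{mn}}` satisfies conjugate cancellation with respect to `α` and `β`,
then `γ` generates `𝔽_{q^{mn}}` over `𝔽_q`. -/
theorem stmt7 (F : Type*) [Field F] [Fintype F] (q : ℕ) (hq : q = Fintype.card F)
    (m n : ℕ) (hm : 0 < m) (hn : 0 < n) (hmn : Nat.Coprime m n)
    (α β γ : AlgebraicClosure F)
    (hα : (minpoly F α).natDegree = m) (hβ : (minpoly F β).natDegree = n)
    (hγmem : γ ^ q ^ (m * n) = γ)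
    (hcc : ∀ k : ℕ,
      ((γ = γ ^ q ^ k ∧ β = β ^ q ^ k) → α = α ^ q ^ k) ∧
      ((γ = γ ^ q ^ k ∧ α = α ^ q ^ k) → β = β ^ q ^ k)) :
    (minpoly F γ).natDegree = m * n := by
  set d := (minpoly F γ).natDegree with hd
  have hkeyγ : ∀ k, γ ^ q ^ k = γ ↔ d ∣ k := fun k => aux_key q hq γ k
  have hkeyα : ∀ k, α ^ q ^ k = α ↔ m ∣ k := by
    intro k; rw [← hα]; exact aux_key q hq α k
  have hkeyβ : ∀ k, β ^ q ^ k = β ↔ n ∣ k := by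
    intro k; rw [← hβ]; exact aux_key q hq β k
  have hdmn : d ∣ m * n := (hkeyγ (m * n)).mp hγmem
  have hmd : m ∣ d := by
    have h1 : γ ^ q ^ (d * n) = γ := (hkeyγ (d * n)).mpr ⟨n, rfl⟩
    have h2 : β ^ q ^ (d * n) = β := (hkeyβ (d * n)).mpr ⟨d, Nat.mul_comm d n⟩
    have h3 := (hcc (d * n)).1 ⟨h1.symm, h2.symm⟩
    have h4 : m ∣ d * n := (hkeyα (d * n)).mp h3.symm
    exact hmn.dvd_of_dvd_mul_right h4
  have hnd : n ∣ d := by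
    have h1 : γ ^ q ^ (d * m) = γ := (hkeyγ (d * m)).mpr ⟨m, rfl⟩
    have h2 : α ^ q ^ (d * m) = α := (hkeyα (d * m)).mpr ⟨d, Nat.mul_comm d m⟩
    have h3 := (hcc (d * m)).2 ⟨h1.symm, h2.symm⟩
    have h4 : n ∣ d * m := (hkeyβ (d * m)).mp h3.symm
    exact (hmn.symm).dvd_of_dvd_mul_right h4
  have hmnd : m * n ∣ d := Nat.Coprime.mul_dvd_of_dvd_of_dvd hmn hmd hnd
  exact Nat.dvd_antisymm hdmn hmnd
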